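/- For every n ≥ 1 and d ≥ 1, the Lie algebra 𝔰𝔩_n(ℂ[u^{±1},v]⋊Γ) is isomorphic, as a Lie algebra over ℂ, to 𝔰𝔩_{nd}(ℂ[s^{±1},t]), where ℂ[s^{±1},t] is the ring of polynomials in t with coefficients in the Laurent polynomial ring ℂ[s^{±1}]. -/

import Mathlib

/-!
STATEMENT 12: For every `n ≥ 1` and `d ≥ 1`, the Lie algebra `𝔰𝔩_n(ℂ[u^{±1}, v] ⋊ Γ)`
is isomorphic, as a Lie algebra over ℂ, to `𝔰𝔩_{nd}(ℂ[s^{±1}][t])`, where `ℂ[s^{±1}][t]`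
is the ring of polynomials in `t` over the Laurent polynomial ring `ℂ[s^{±1}]`.

The algebra `ℂ[u^{±1}, v] ⋊ Γ` (the subalgebra of `ℂ[u^{±1}, v^{±1}] ⋊ Γ` spanned by the
`u^a v^b ξ^c` with `b ≥ 0`) is formalized abstractly: any ℂ-algebra with a ℂ-basis
`b a b' c` (`a ∈ ℤ`, `b' ∈ ℕ`, `c ∈ ℤ/dℤ`, representing `u^a v^{b'} ξ^c`) satisfying
the multiplication rule `(u^a v^b ξ^c)·(u^e v^f ξ^g) = ζ^{c(e−f)} u^{a+e} v^{b+f} ξ^{c+g}`.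
-/

/-- Data exhibiting `B` as the skew group algebra `ℂ[u^{±1}, v] ⋊ (ℤ/dℤ)`,
where `b a b' c` represents the basis element `u^a v^{b'} ξ^c`. -/
structure SkewMixedAlgebra (d : ℕ) (ζ : ℂ) (B : Type) [Ring B] [Algebra ℂ B] where
  b : ℤ → ℕ → ZMod d → B
  basis : Module.Basis (ℤ × ℕ × ZMod d) ℂ B
  basis_eq : ∀ (a : ℤ) (b' : ℕ) (c : ZMod d), basis (a, b', c) = b a b' c
  b_one : b 0 0 0 = 1
  b_mul : ∀ (a : ℤ) (b' : ℕ) (c : ZMod d) (e : ℤ) (f : ℕ) (g : ZMod d),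
    b a b' c * b e f g = (ζ ^ ((c.val : ℤ) * (e - (f : ℤ)))) • b (a + e) (b' + f) (c + g)

attribute [local instance 100] LieRing.ofAssociativeRing

noncomputable section Stmt12Aux

open Polynomial LaurentPolynomial Matrix Finset

/-- the Laurent-polynomial coefficient ring `ℂ[s^{±1}][t]` -/
abbrev RR : Type := Polynomial (LaurentPolynomial ℂ)

/-- the monomial `s^k t^b` -/
def mon (k : ℤ) (b : ℕ) : RR := Polynomial.C (T k) * Polynomial.X ^ b

lemma mon_mul (k k' : ℤ) (b b' : ℕ) : mon k b * mon k' b' = mon (k + k') (b + b') := by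
  simp only [mon, T_add, Polynomial.C_mul, pow_add]; ring

lemma mon_zero : mon 0 0 = 1 := by simp [mon]

variable (d : ℕ) (ζ : ℂ)

/-- reduction of an integer mod `d`, as an element of `Fin d` -/
def idx (hd : 0 < d) (x : ℤ) : Fin d :=
  ⟨(x % d).toNat, by
    have hdz : (d : ℤ) ≠ 0 := by exact_mod_cast hd.ne'
    have h1 : 0 ≤ x % d := Int.emod_nonneg x hdz
    have h2 : x % d < d := Int.emod_lt_of_pos x (by exact_mod_cast hd)
    omega⟩

lemma idx_val (hd : 0 < d) (x : ℤ) : (((idx d hd x) : ℕ) : ℤ) = x % d := by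
  have hdz : (d : ℤ) ≠ 0 := by exact_mod_cast hd.ne'
  simp only [idx]
  exact Int.toNat_of_nonneg (Int.emod_nonneg x hdz)

/-- the matrix representing the basis element `u^a v^b ξ^c` -/
def Mmat (a : ℤ) (b : ℕ) (c : ZMod d) : Matrix (Fin d) (Fin d) RR :=
  Matrix.of fun i j =>
    if ((i : ℕ) : ℤ) = (a + (j : ℕ) - b) % d then
      ζ ^ (((j : ℕ) : ℤ) * (c.val : ℤ)) • mon ((a + (j : ℕ) - b - (i : ℕ)) / d) b
    else 0

lemma zeta_ne (hd : 0 < d) (hζ : IsPrimitiveRoot ζ d) : ζ ≠ 0 := by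
  intro h
  have h1 := hζ.pow_eq_one
  rw [h] at h1
  simp [zero_pow hd.ne'] at h1

lemma zpow_modeq (hd : 0 < d) (hζ : IsPrimitiveRoot ζ d) {x y : ℤ}
    (h : x ≡ y [ZMOD (d : ℤ)]) : ζ ^ x = ζ ^ y := by
  have h1 : ζ ^ (y - x) = 1 := (hζ.zpow_eq_one_iff_dvd _).2 h.dvd
  have h2 : ζ ^ (x + (y - x)) = ζ ^ x * ζ ^ (y - x) :=
    zpow_add₀ (zeta_ne d ζ hd hζ) _ _
  rw [h1, mul_one] at h2
  rw [← h2]; ring_nf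

lemma char_sum_range (hζ : IsPrimitiveRoot ζ d) (m : ℤ) :
    ∑ i ∈ Finset.range d, ζ ^ ((i : ℤ) * m) = if (d : ℤ) ∣ m then (d : ℂ) else 0 := by
  split_ifs with h
  · have h1 : ∀ i ∈ Finset.range d, ζ ^ ((i : ℤ) * m) = 1 := fun i _ =>
      (hζ.zpow_eq_one_iff_dvd _).2 (h.mul_left _)
    rw [Finset.sum_congr rfl h1]
    simp
  · have hx : ζ ^ m ≠ 1 := fun hx => h ((hζ.zpow_eq_one_iff_dvd m).1 hx)
    have hxd : (ζ ^ m) ^ d = 1 := by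
      rw [← zpow_natCast (ζ ^ m) d, ← _root_.zpow_mul, mul_comm, _root_.zpow_mul,
        zpow_natCast, hζ.pow_eq_one, _root_.one_zpow]
    have h1 : ∀ i ∈ Finset.range d, ζ ^ ((i : ℤ) * m) = (ζ ^ m) ^ i := by
      intro i _
      rw [mul_comm, _root_.zpow_mul, zpow_natCast]
    rw [Finset.sum_congr rfl h1, geom_sum_eq hx, hxd, sub_self, zero_div]

lemma char_sum_zmod [NeZero d] (hζ : IsPrimitiveRoot ζ d) (m : ℤ) :
    ∑ c : ZMod d, ζ ^ ((c.val : ℤ) * m) = if (d : ℤ) ∣ m then (d : ℂ) else 0 := by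
  rw [← char_sum_range d ζ hζ m]
  refine Finset.sum_nbij' (fun c => (ZMod.val c)) (fun i => ((i : ℕ) : ZMod d))
    ?_ ?_ ?_ ?_ ?_
  · intro c _; exact Finset.mem_range.2 (ZMod.val_lt c)
  · intro i _; exact Finset.mem_univ _
  · intro c _; exact ZMod.natCast_rightInverse c
  · intro i hi; exact ZMod.val_cast_of_lt (Finset.mem_range.1 hi)
  · intro c _; rfl

lemma dvd_sub_iff_eq_zmod [NeZero d] (c c' : ZMod d) :
    (d : ℤ) ∣ ((c.val : ℤ) - (c'.val : ℤ)) ↔ c' = c := by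
  constructor
  · intro h
    have h1 : c.val < d := ZMod.val_lt c
    have h2 : c'.val < d := ZMod.val_lt c'
    have h3 : (c.val : ℤ) - c'.val = 0 := by
      rcases h with ⟨k, hk⟩
      have hd' : (0:ℤ) < d := by
        have := Nat.pos_of_ne_zero (NeZero.ne d); exact_mod_cast this
      rcases lt_trichotomy k 0 with hk0 | hk0 | hk0
      · nlinarith [Int.ofNat_nonneg c.val, Int.ofNat_nonneg c'.val]
      · rw [hk0, mul_zero] at hk; exact hk
      · nlinarith [Int.ofNat_nonneg c.val, Int.ofNat_nonneg c'.val]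
    have h4 : c.val = c'.val := by omega
    exact (ZMod.val_injective d h4).symm
  · rintro rfl; simp

lemma dvd_sub_iff_eq_fin (hd : 0 < d) (j j' : Fin d) :
    (d : ℤ) ∣ (((j : ℕ) : ℤ) - ((j' : ℕ) : ℤ)) ↔ j' = j := by
  constructor
  · intro h
    have h1 : (j : ℕ) < d := j.isLt
    have h2 : (j' : ℕ) < d := j'.isLt
    have h3 : ((j : ℕ) : ℤ) - (j' : ℕ) = 0 := by
      rcases h with ⟨k, hk⟩
      have hd' : (0:ℤ) < d := by exact_mod_cast hd
      rcases lt_trichotomy k 0 with hk0 | hk0 | hk0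
      · nlinarith [Int.ofNat_nonneg (j : ℕ), Int.ofNat_nonneg (j' : ℕ)]
      · rw [hk0, mul_zero] at hk; exact hk
      · nlinarith [Int.ofNat_nonneg (j : ℕ), Int.ofNat_nonneg (j' : ℕ)]
    exact (Fin.ext (by omega)).symm
  · rintro rfl; simp

lemma fin_emod_self (hd : 0 < d) (i : Fin d) : ((i : ℕ) : ℤ) % d = (i : ℕ) :=
  Int.emod_eq_of_lt (by positivity) (by exact_mod_cast i.isLt)

lemma Mmat_one [NeZero d] (hd : 0 < d) : Mmat d ζ 0 0 0 = 1 := by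
  refine Matrix.ext fun i j => ?_
  simp only [Mmat, Matrix.of_apply]
  by_cases h : i = j
  · subst h
    rw [if_pos, Matrix.one_apply_eq]
    · have h0 : ((0:ℤ) + (i : ℕ) - (0:ℕ) - (i : ℕ)) / d = 0 := by
        norm_num
      rw [h0]
      simp [mon_zero, ZMod.val_zero]
    · simpa using (fin_emod_self d hd i).symm
  · rw [if_neg, Matrix.one_apply_ne h]
    intro hc
    apply h
    simp only [Nat.cast_zero, add_zero, zero_add, sub_zero] at hc
    rw [fin_emod_self d hd j] at hc
    exact Fin.ext (by exact_mod_cast hc)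

lemma Mmat_mul [NeZero d] (hd : 0 < d) (hζ : IsPrimitiveRoot ζ d)
    (a : ℤ) (b : ℕ) (c : ZMod d) (e : ℤ) (f : ℕ) (g : ZMod d) :
    Mmat d ζ a b c * Mmat d ζ e f g
      = (ζ ^ ((c.val : ℤ) * (e - (f : ℤ)))) • Mmat d ζ (a + e) (b + f) (c + g) := by
  have hdz : (d : ℤ) ≠ 0 := by exact_mod_cast hd.ne'
  have hzne : ζ ≠ 0 := zeta_ne d ζ hd hζ
  refine Matrix.ext fun i j => ?_
  rw [Matrix.mul_apply, Matrix.smul_apply]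
  set l₀ : Fin d := idx d hd (e + (j : ℕ) - f) with hl₀def
  have hl₀v : ((l₀ : ℕ) : ℤ) = (e + (j : ℕ) - f) % d := idx_val d hd _
  rw [Finset.sum_eq_single l₀]
  rotate_left
  · intro l _ hl
    have hcond : ¬ (((l : ℕ) : ℤ) = (e + (j : ℕ) - f) % d) := by
      intro hc
      apply hl
      refine Fin.ext ?_
      have : ((l : ℕ) : ℤ) = ((l₀ : ℕ) : ℤ) := by rw [hc, hl₀v]
      exact_mod_cast this
    simp only [Mmat, Matrix.of_apply]
    rw [if_neg hcond, mul_zero]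
  · intro hmem; exact absurd (Finset.mem_univ _) hmem
  simp only [Mmat, Matrix.of_apply]
  rw [if_pos hl₀v]
  -- congruence between the two membership conditions
  have hmodeq : ((l₀ : ℕ) : ℤ) ≡ e + (j : ℕ) - f [ZMOD (d : ℤ)] := by
    show ((l₀ : ℕ) : ℤ) % d = (e + (j : ℕ) - f) % d
    rw [hl₀v, Int.emod_emod_of_dvd _ dvd_rfl]
  have hmod : (a + ((l₀ : ℕ) : ℤ) - b) % d = ((a + e) + (j : ℕ) - ((b + f : ℕ) : ℤ)) % d := by
    have h1 := (hmodeq.add_left a).sub_right (b : ℤ)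
    have h2 : a + (e + ((j : ℕ) : ℤ) - f) - b = (a + e) + (j : ℕ) - ((b + f : ℕ) : ℤ) := by
      push_cast; ring
    rw [h2] at h1
    exact h1
  by_cases hi : ((i : ℕ) : ℤ) = (a + ((l₀ : ℕ) : ℤ) - b) % d
  · rw [if_pos hi, if_pos (by rw [← hmod]; exact hi)]
    obtain ⟨p, hp⟩ : (d : ℤ) ∣ (a + ((l₀ : ℕ) : ℤ) - b - (i : ℕ)) := by
      refine ⟨(a + ((l₀ : ℕ) : ℤ) - b) / d, ?_⟩
      rw [hi]
      rw [Int.emod_def]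
      ring
    obtain ⟨q, hq⟩ : (d : ℤ) ∣ (e + ((j : ℕ) : ℤ) - f - (l₀ : ℕ)) := by
      refine ⟨(e + ((j : ℕ) : ℤ) - f) / d, ?_⟩
      rw [hl₀v]
      rw [Int.emod_def]
      ring
    have hK1 : (a + ((l₀ : ℕ) : ℤ) - b - (i : ℕ)) / d = p := by
      rw [hp]; exact Int.mul_ediv_cancel_left _ hdz
    have hK2 : (e + ((j : ℕ) : ℤ) - f - (l₀ : ℕ)) / d = q := by
      rw [hq]; exact Int.mul_ediv_cancel_left _ hdz
    have hK : ((a + e) + ((j : ℕ) : ℤ) - ((b + f : ℕ) : ℤ) - (i : ℕ)) / d = p + q := by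
      have hnum : (a + e) + ((j : ℕ) : ℤ) - ((b + f : ℕ) : ℤ) - (i : ℕ) = d * (p + q) := by
        push_cast
        push_cast at hp hq
        linarith
      rw [hnum]; exact Int.mul_ediv_cancel_left _ hdz
    rw [smul_mul_smul_comm, mon_mul, hK1, hK2, hK, smul_smul]
    congr 1
    rw [← zpow_add₀ hzne, ← zpow_add₀ hzne]
    apply zpow_modeq d ζ hd hζ
    -- exponent congruence
    have hcg : (((c + g).val : ℕ) : ℤ) ≡ (c.val : ℤ) + (g.val : ℤ) [ZMOD (d : ℤ)] := by
      show ((((c + g).val : ℕ) : ℤ)) % d = ((c.val : ℤ) + g.val) % d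
      rw [ZMod.val_add]
      push_cast [Int.natCast_mod]
      rw [Int.emod_emod_of_dvd _ dvd_rfl]
    obtain ⟨A, hA⟩ := hmodeq.dvd
    obtain ⟨Bq, hB⟩ := hcg.dvd
    rw [Int.modEq_iff_dvd]
    refine ⟨(c.val : ℤ) * A - ((j : ℕ) : ℤ) * Bq, ?_⟩
    linear_combination (c.val : ℤ) * hA - ((j : ℕ) : ℤ) * hB
  · rw [if_neg hi, if_neg (by rw [← hmod]; exact hi), zero_mul, smul_zero]

/-- a `ℂ`-basis of the matrix algebra indexed by `(k, b), (i, j)` with value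
`E_{ij} s^k t^b` -/
def bMat : Module.Basis ((ℤ × ℕ) × Fin d × Fin d) ℂ (Matrix (Fin d) (Fin d) RR) :=
  ((AddMonoidAlgebra.basis ℤ ℂ).smulTower
      (Polynomial.basisMonomials (LaurentPolynomial ℂ))).smulTower
    (Matrix.stdBasis RR (Fin d) (Fin d))

lemma bMat_apply (k : ℤ) (b : ℕ) (i j : Fin d) :
    bMat d ((k, b), (i, j)) = Matrix.single i j (mon k b) := by
  have h0 : bMat d ((k, b), (i, j))
      = ((AddMonoidAlgebra.basis ℤ ℂ).smulTower
          (Polynomial.basisMonomials (LaurentPolynomial ℂ)) (k, b))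
        • (Matrix.stdBasis RR (Fin d) (Fin d) (i, j)) := Module.Basis.smulTower_apply _ _ _
  rw [h0, Module.Basis.smulTower_apply, Matrix.stdBasis_eq_single]
  have hk : (AddMonoidAlgebra.basis ℤ ℂ : Module.Basis ℤ ℂ (LaurentPolynomial ℂ)) k = T k := by
    rfl
  have hb : (Polynomial.basisMonomials (LaurentPolynomial ℂ)) b
      = Polynomial.monomial b 1 := by
    rw [Polynomial.coe_basisMonomials]
  simp only [hk, hb]
  rw [Polynomial.smul_monomial, smul_eq_mul, mul_one,
    Matrix.smul_single, smul_eq_mul, mul_one, mon,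
    Polynomial.C_mul_X_pow_eq_monomial]

lemma Mmat_decomp (hd : 0 < d) (a : ℤ) (b : ℕ) (c : ZMod d) :
    Mmat d ζ a b c = ∑ j : Fin d,
      (ζ ^ (((j : ℕ) : ℤ) * (c.val : ℤ)))
        • Matrix.single (idx d hd (a + (j : ℕ) - b)) j
            (mon ((a + (j : ℕ) - b - ((idx d hd (a + (j : ℕ) - b) : ℕ) : ℤ)) / d) b) := by
  refine Matrix.ext fun i j' => ?_
  rw [Matrix.sum_apply]
  rw [Finset.sum_eq_single j']
  rotate_left
  · intro j _ hj
    rw [Matrix.smul_apply, Matrix.single_apply_of_ne, smul_zero]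
    intro hc
    exact hj hc.2
  · intro hmem; exact absurd (Finset.mem_univ _) hmem
  rw [Matrix.smul_apply]
  simp only [Mmat, Matrix.of_apply]
  by_cases hi : ((i : ℕ) : ℤ) = (a + (j' : ℕ) - b) % d
  · have hieq : i = idx d hd (a + (j' : ℕ) - b) := by
      refine Fin.ext ?_
      have : ((i : ℕ) : ℤ) = ((idx d hd (a + (j' : ℕ) - b) : ℕ) : ℤ) := by
        rw [idx_val]; exact hi
      exact_mod_cast this
    rw [if_pos hi, ← hieq, Matrix.single_apply_same]
  · rw [if_neg hi, Matrix.single_apply_of_ne, smul_zero]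
    intro hc
    apply hi
    rw [← hc.1, idx_val]

variable (B : Type) [Ring B] [Algebra ℂ B]

/-- the linear map `B → M_d(ℂ[s^{±1}][t])` sending `u^a v^b ξ^c` to its matrix -/
def phi (S : SkewMixedAlgebra d ζ B) : B →ₗ[ℂ] Matrix (Fin d) (Fin d) RR :=
  S.basis.constr ℂ fun p => Mmat d ζ p.1 p.2.1 p.2.2

lemma phi_b (S : SkewMixedAlgebra d ζ B) (a : ℤ) (b : ℕ) (c : ZMod d) :
    phi d ζ B S (S.b a b c) = Mmat d ζ a b c := by
  rw [← S.basis_eq]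
  exact S.basis.constr_basis ℂ _ _

/-- the inverse image of `E_{ij} s^k t^b` -/
def elt [NeZero d] (S : SkewMixedAlgebra d ζ B) (k : ℤ) (b : ℕ) (i j : Fin d) : B :=
  (d : ℂ)⁻¹ • ∑ c : ZMod d, (ζ ^ (-(((j : ℕ) : ℤ) * (c.val : ℤ)))) •
    S.b (((i : ℕ) : ℤ) - ((j : ℕ) : ℤ) + b + d * k) b c

/-- the inverse linear map -/
def psi [NeZero d] (S : SkewMixedAlgebra d ζ B) :
    Matrix (Fin d) (Fin d) RR →ₗ[ℂ] B :=
  (bMat d).constr ℂ fun q => elt d ζ B S q.1.1 q.1.2 q.2.1 q.2.2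

lemma psi_std [NeZero d] (S : SkewMixedAlgebra d ζ B) (k : ℤ) (b : ℕ) (i j : Fin d) :
    psi d ζ B S (Matrix.single i j (mon k b)) = elt d ζ B S k b i j := by
  rw [← bMat_apply]
  exact (bMat d).constr_basis ℂ _ _

lemma psi_Mmat [NeZero d] (hd : 0 < d) (hζ : IsPrimitiveRoot ζ d)
    (S : SkewMixedAlgebra d ζ B) (a : ℤ) (b : ℕ) (c : ZMod d) :
    psi d ζ B S (Mmat d ζ a b c) = S.b a b c := by
  have hdz : (d : ℤ) ≠ 0 := by exact_mod_cast hd.ne'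
  have hdC : (d : ℂ) ≠ 0 := by exact_mod_cast hd.ne'
  have hzne : ζ ≠ 0 := zeta_ne d ζ hd hζ
  rw [Mmat_decomp d ζ hd a b c, map_sum]
  simp only [_root_.map_smul, psi_std]
  have harg : ∀ j : Fin d, ((idx d hd (a + (j : ℕ) - b) : ℕ) : ℤ) - ((j : ℕ) : ℤ) + b
      + d * ((a + (j : ℕ) - b - ((idx d hd (a + (j : ℕ) - b) : ℕ) : ℤ)) / d) = a := by
    intro j
    rw [idx_val]
    have h2 : a + ((j : ℕ) : ℤ) - b - (a + (j : ℕ) - b) % d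
        = d * ((a + ((j : ℕ) : ℤ) - b) / d) := by
      rw [Int.emod_def]; ring
    rw [h2, Int.mul_ediv_cancel_left _ hdz, Int.emod_def]
    ring
  simp only [elt, harg]
  simp only [Finset.smul_sum, smul_smul]
  rw [Finset.sum_comm]
  have hin : ∀ c' : ZMod d,
      ∑ j : Fin d, (ζ ^ (((j : ℕ) : ℤ) * (c.val : ℤ))
        * ((d : ℂ)⁻¹ * ζ ^ (-(((j : ℕ) : ℤ) * (c'.val : ℤ))))) • S.b a b c'
      = (if c' = c then (1 : ℂ) else 0) • S.b a b c' := by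
    intro c'
    rw [← Finset.sum_smul]
    congr 1
    have hcoef : ∀ j : Fin d, ζ ^ (((j : ℕ) : ℤ) * (c.val : ℤ))
        * ((d : ℂ)⁻¹ * ζ ^ (-(((j : ℕ) : ℤ) * (c'.val : ℤ))))
        = (d : ℂ)⁻¹ * ζ ^ (((j : ℕ) : ℤ) * ((c.val : ℤ) - (c'.val : ℤ))) := by
      intro j
      have h3 : ζ ^ (((j : ℕ) : ℤ) * (c.val : ℤ)) * ζ ^ (-(((j : ℕ) : ℤ) * (c'.val : ℤ)))
          = ζ ^ (((j : ℕ) : ℤ) * ((c.val : ℤ) - (c'.val : ℤ))) := by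
        rw [← zpow_add₀ hzne]
        congr 1
        ring
      calc ζ ^ (((j : ℕ) : ℤ) * (c.val : ℤ))
            * ((d : ℂ)⁻¹ * ζ ^ (-(((j : ℕ) : ℤ) * (c'.val : ℤ))))
          = (d : ℂ)⁻¹ * (ζ ^ (((j : ℕ) : ℤ) * (c.val : ℤ))
            * ζ ^ (-(((j : ℕ) : ℤ) * (c'.val : ℤ)))) := by ring
        _ = (d : ℂ)⁻¹ * ζ ^ (((j : ℕ) : ℤ) * ((c.val : ℤ) - (c'.val : ℤ))) := by rw [h3]
    rw [Finset.sum_congr rfl (fun j _ => hcoef j), ← Finset.mul_sum]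
    rw [show ∑ j : Fin d, ζ ^ (((j : ℕ) : ℤ) * ((c.val : ℤ) - (c'.val : ℤ)))
        = ∑ i ∈ Finset.range d, ζ ^ ((i : ℤ) * ((c.val : ℤ) - (c'.val : ℤ))) from
      Fin.sum_univ_eq_sum_range (fun n => ζ ^ ((n : ℤ) * ((c.val : ℤ) - (c'.val : ℤ)))) d]
    rw [char_sum_range d ζ hζ]
    by_cases h : (d : ℤ) ∣ ((c.val : ℤ) - (c'.val : ℤ))
    · rw [if_pos h, if_pos ((dvd_sub_iff_eq_zmod d c c').1 h),
        inv_mul_cancel₀ hdC]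
    · rw [if_neg h, if_neg (fun hc => h ((dvd_sub_iff_eq_zmod d c c').2 hc)), mul_zero]
  rw [Finset.sum_congr rfl (fun c' _ => hin c')]
  simp only [ite_smul, one_smul, zero_smul]
  rw [Finset.sum_ite_eq' Finset.univ c]
  rw [if_pos (Finset.mem_univ c)]

lemma phi_elt [NeZero d] (hd : 0 < d) (hζ : IsPrimitiveRoot ζ d)
    (S : SkewMixedAlgebra d ζ B) (k : ℤ) (b : ℕ) (i j : Fin d) :
    phi d ζ B S (elt d ζ B S k b i j) = Matrix.single i j (mon k b) := by
  have hdz : (d : ℤ) ≠ 0 := by exact_mod_cast hd.ne'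
  have hdC : (d : ℂ) ≠ 0 := by exact_mod_cast hd.ne'
  have hzne : ζ ≠ 0 := zeta_ne d ζ hd hζ
  have hnum : ((i : ℕ) : ℤ) - ((j : ℕ) : ℤ) + b + d * k + ((j : ℕ) : ℤ) - b
      = (i : ℕ) + d * k := by ring
  have hidx : idx d hd (((i : ℕ) : ℤ) - ((j : ℕ) : ℤ) + b + d * k + ((j : ℕ) : ℤ) - b)
      = i := by
    refine Fin.ext ?_
    have h1 : ((idx d hd (((i : ℕ) : ℤ) - ((j : ℕ) : ℤ) + b + d * k + ((j : ℕ) : ℤ) - b)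
        : ℕ) : ℤ) = ((i : ℕ) : ℤ) := by
      rw [idx_val, hnum, Int.add_mul_emod_self_left, fin_emod_self d hd i]
    exact_mod_cast h1
  have hdiv : (((i : ℕ) : ℤ) - ((j : ℕ) : ℤ) + b + d * k + ((j : ℕ) : ℤ) - b
      - ((idx d hd (((i : ℕ) : ℤ) - ((j : ℕ) : ℤ) + b + d * k + ((j : ℕ) : ℤ) - b) : ℕ) : ℤ))
      / d = k := by
    rw [hidx, hnum]
    rw [show ((i : ℕ) : ℤ) + d * k - (i : ℕ) = d * k by ring]
    exact Int.mul_ediv_cancel_left _ hdz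
  simp only [elt, _root_.map_smul, map_sum, phi_b]
  simp only [Mmat_decomp d ζ hd]
  simp only [Finset.smul_sum, smul_smul]
  rw [Finset.sum_comm]
  have hin : ∀ j' : Fin d,
      ∑ c : ZMod d, ((d : ℂ)⁻¹ * (ζ ^ (-(((j : ℕ) : ℤ) * (c.val : ℤ)))
          * ζ ^ (((j' : ℕ) : ℤ) * (c.val : ℤ))))
        • Matrix.single
            (idx d hd (((i : ℕ) : ℤ) - ((j : ℕ) : ℤ) + b + d * k + (j' : ℕ) - b)) j'
            (mon ((((i : ℕ) : ℤ) - ((j : ℕ) : ℤ) + b + d * k + (j' : ℕ) - b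
              - ((idx d hd (((i : ℕ) : ℤ) - ((j : ℕ) : ℤ) + b + d * k + (j' : ℕ) - b) : ℕ)
                : ℤ)) / d) b)
      = (if j' = j then (1 : ℂ) else 0)
        • Matrix.single
            (idx d hd (((i : ℕ) : ℤ) - ((j : ℕ) : ℤ) + b + d * k + (j' : ℕ) - b)) j'
            (mon ((((i : ℕ) : ℤ) - ((j : ℕ) : ℤ) + b + d * k + (j' : ℕ) - b
              - ((idx d hd (((i : ℕ) : ℤ) - ((j : ℕ) : ℤ) + b + d * k + (j' : ℕ) - b) : ℕ)
                : ℤ)) / d) b) := by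
    intro j'
    rw [← Finset.sum_smul]
    congr 1
    have hcoef : ∀ c : ZMod d, (d : ℂ)⁻¹ * (ζ ^ (-(((j : ℕ) : ℤ) * (c.val : ℤ)))
        * ζ ^ (((j' : ℕ) : ℤ) * (c.val : ℤ)))
        = (d : ℂ)⁻¹ * ζ ^ ((c.val : ℤ) * (((j' : ℕ) : ℤ) - ((j : ℕ) : ℤ))) := by
      intro c
      congr 1
      rw [← zpow_add₀ hzne]
      congr 1
      ring
    rw [Finset.sum_congr rfl (fun c _ => hcoef c), ← Finset.mul_sum,
      char_sum_zmod d ζ hζ]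
    by_cases h : (d : ℤ) ∣ (((j' : ℕ) : ℤ) - ((j : ℕ) : ℤ))
    · rw [if_pos h, if_pos ((dvd_sub_iff_eq_fin d hd j' j).1 h).symm,
        inv_mul_cancel₀ hdC]
    · rw [if_neg h, if_neg (fun hc => h ((dvd_sub_iff_eq_fin d hd j' j).2 hc.symm)),
        mul_zero]
  rw [Finset.sum_congr rfl (fun j' _ => hin j')]
  simp only [ite_smul, one_smul, zero_smul]
  rw [Finset.sum_ite_eq' Finset.univ j]
  have hfin : (((i : ℕ) : ℤ) - ((j : ℕ) : ℤ) + b + d * k + ((j : ℕ) : ℤ) - b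
      - ((i : ℕ) : ℤ)) = d * k := by ring
  rw [if_pos (Finset.mem_univ j), hidx, hfin, Int.mul_ediv_cancel_left _ hdz]

lemma phi_psi_id [NeZero d] (hd : 0 < d) (hζ : IsPrimitiveRoot ζ d)
    (S : SkewMixedAlgebra d ζ B) :
    (phi d ζ B S).comp (psi d ζ B S) = LinearMap.id :=
  Module.Basis.ext (bMat d) fun q => by
    obtain ⟨⟨k, b⟩, i, j⟩ := q
    simp only [LinearMap.comp_apply, LinearMap.id_apply]
    rw [bMat_apply, psi_std, phi_elt d ζ B hd hζ, ← bMat_apply]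

lemma psi_phi_id [NeZero d] (hd : 0 < d) (hζ : IsPrimitiveRoot ζ d)
    (S : SkewMixedAlgebra d ζ B) :
    (psi d ζ B S).comp (phi d ζ B S) = LinearMap.id :=
  Module.Basis.ext S.basis fun p => by
    obtain ⟨a, b, c⟩ := p
    simp only [LinearMap.comp_apply, LinearMap.id_apply]
    rw [S.basis_eq, phi_b, psi_Mmat d ζ B hd hζ]

lemma phi_one (S : SkewMixedAlgebra d ζ B) [NeZero d] (hd : 0 < d) :
    phi d ζ B S 1 = 1 := by
  rw [← S.b_one, phi_b, Mmat_one d ζ hd]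

lemma phi_mul [NeZero d] (hd : 0 < d) (hζ : IsPrimitiveRoot ζ d)
    (S : SkewMixedAlgebra d ζ B) (x y : B) :
    phi d ζ B S (x * y) = phi d ζ B S x * phi d ζ B S y := by
  let F : B →ₗ[ℂ] B →ₗ[ℂ] Matrix (Fin d) (Fin d) RR :=
    LinearMap.mk₂ ℂ (fun x y => phi d ζ B S (x * y))
      (fun x x' y => by simp only [add_mul, map_add])
      (fun cc x y => by simp only [smul_mul_assoc, _root_.map_smul])
      (fun x y y' => by simp only [mul_add, map_add])
      (fun cc x y => by simp only [mul_smul_comm, _root_.map_smul])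
  let G : B →ₗ[ℂ] B →ₗ[ℂ] Matrix (Fin d) (Fin d) RR :=
    LinearMap.mk₂ ℂ (fun x y => phi d ζ B S x * phi d ζ B S y)
      (fun x x' y => by simp only [map_add, add_mul])
      (fun cc x y => by simp only [_root_.map_smul, smul_mul_assoc])
      (fun x y y' => by simp only [map_add, mul_add])
      (fun cc x y => by simp only [_root_.map_smul, mul_smul_comm])
  have hFG : F = G := by
    refine Module.Basis.ext S.basis fun p => ?_
    refine Module.Basis.ext S.basis fun q => ?_
    obtain ⟨a, b, c⟩ := p
    obtain ⟨e, f, g⟩ := q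
    simp only [F, G, LinearMap.mk₂_apply]
    rw [S.basis_eq, S.basis_eq, S.b_mul, _root_.map_smul, phi_b, phi_b, phi_b,
      Mmat_mul d ζ hd hζ]
  exact DFunLike.congr_fun (DFunLike.congr_fun hFG x) y

/-- the algebra isomorphism `B ≃ M_d(ℂ[s^{±1}][t])` -/
def algEquivB [NeZero d] (hd : 0 < d) (hζ : IsPrimitiveRoot ζ d)
    (S : SkewMixedAlgebra d ζ B) : B ≃ₐ[ℂ] Matrix (Fin d) (Fin d) RR :=
  AlgEquiv.ofLinearEquiv
    (LinearEquiv.ofLinear (phi d ζ B S) (psi d ζ B S)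
      (phi_psi_id d ζ B hd hζ S) (psi_phi_id d ζ B hd hζ S))
    (phi_one d ζ B S hd) (phi_mul d ζ B hd hζ S)

/-- a Lie algebra equivalence restricts to derived algebras -/
lemma lie_derived_equiv (L L' : Type) [LieRing L] [LieAlgebra ℂ L] [LieRing L']
    [LieAlgebra ℂ L'] (e : L ≃ₗ⁅ℂ⁆ L') :
    Nonempty ((⁅(⊤ : LieIdeal ℂ L), (⊤ : LieIdeal ℂ L)⁆ : LieIdeal ℂ L) ≃ₗ⁅ℂ⁆
      (⁅(⊤ : LieIdeal ℂ L'), (⊤ : LieIdeal ℂ L')⁆ : LieIdeal ℂ L')) := by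
  set I : LieIdeal ℂ L := ⁅(⊤ : LieIdeal ℂ L), (⊤ : LieIdeal ℂ L)⁆ with hI
  set I' : LieIdeal ℂ L' := ⁅(⊤ : LieIdeal ℂ L'), (⊤ : LieIdeal ℂ L')⁆ with hI'
  have key : ∀ (M M' : Type) [LieRing M] [LieAlgebra ℂ M] [LieRing M'] [LieAlgebra ℂ M']
      (f : M ≃ₗ⁅ℂ⁆ M') (x : M), x ∈ (⁅(⊤ : LieIdeal ℂ M), (⊤ : LieIdeal ℂ M)⁆ : LieIdeal ℂ M) →
      f x ∈ (⁅(⊤ : LieIdeal ℂ M'), (⊤ : LieIdeal ℂ M')⁆ : LieIdeal ℂ M') := by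
    intro M M' _ _ _ _ f x hx
    have h : (⁅(⊤ : LieIdeal ℂ M), (⊤ : LieIdeal ℂ M)⁆ : LieIdeal ℂ M) ≤
        LieIdeal.comap f.toLieHom ⁅(⊤ : LieIdeal ℂ M'), (⊤ : LieIdeal ℂ M')⁆ := by
      rw [LieSubmodule.lieIdeal_oper_eq_span]
      apply LieSubmodule.lieSpan_le.2
      rintro _ ⟨a, bb, rfl⟩
      simp only [SetLike.mem_coe, LieIdeal.mem_comap]
      have h2 : f.toLieHom ⁅(a : M), (bb : M)⁆ = ⁅f (a : M), f (bb : M)⁆ := by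
        rw [LieHom.map_lie]; rfl
      rw [h2]
      exact LieSubmodule.lie_mem_lie trivial trivial
    exact h hx
  have hmap : LieSubalgebra.map (e : L →ₗ⁅ℂ⁆ L') (I : LieSubalgebra ℂ L)
      = (I' : LieSubalgebra ℂ L') := by
    ext x
    constructor
    · rintro ⟨y, hy, rfl⟩
      exact key L L' e y hy
    · intro hx
      refine ⟨e.symm x, key L' L e.symm x hx, e.apply_symm_apply x⟩
  exact ⟨LieEquiv.ofSubalgebras _ _ e hmap⟩

end Stmt12Aux

theorem stmt_12 (d : ℕ) (hd : 0 < d) (ζ : ℂ) (hζ : IsPrimitiveRoot ζ d)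
    (B : Type) [Ring B] [Algebra ℂ B] (S : SkewMixedAlgebra d ζ B)
    (n : ℕ) (hn : 1 ≤ n) :
    Nonempty
      ((⁅(⊤ : LieIdeal ℂ (Matrix (Fin n) (Fin n) B)),
          (⊤ : LieIdeal ℂ (Matrix (Fin n) (Fin n) B))⁆ :
          LieIdeal ℂ (Matrix (Fin n) (Fin n) B))
        ≃ₗ⁅ℂ⁆
        (⁅(⊤ : LieIdeal ℂ (Matrix (Fin (n * d)) (Fin (n * d))
              (Polynomial (LaurentPolynomial ℂ)))),
          (⊤ : LieIdeal ℂ (Matrix (Fin (n * d)) (Fin (n * d))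
              (Polynomial (LaurentPolynomial ℂ))))⁆ :
          LieIdeal ℂ (Matrix (Fin (n * d)) (Fin (n * d))
            (Polynomial (LaurentPolynomial ℂ))))) := by
  haveI : NeZero d := ⟨hd.ne'⟩
  let e₀ : B ≃ₐ[ℂ] Matrix (Fin d) (Fin d) RR := algEquivB d ζ B hd hζ S
  let E : Matrix (Fin n) (Fin n) B ≃ₐ[ℂ] Matrix (Fin (n * d)) (Fin (n * d)) RR :=
    ((e₀.mapMatrix (m := Fin n)).trans
      (Matrix.compAlgEquiv (Fin n) (Fin d) RR ℂ)).trans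
      (Matrix.reindexAlgEquiv ℂ RR finProdFinEquiv)
  exact lie_derived_equiv _ _ E.toLieEquiv
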